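/- Let N be a hyperbolic lattice, h, v ∈ N with ⟨h,h⟩>0, ⟨v,v⟩>0, ⟨h,v⟩>0, and let d ∈ Z. Let r ∈ N satisfy ⟨r,h⟩ > 0, ⟨r,v⟩ < 0 and ⟨r,r⟩ = d. Put t_r := −⟨r,h⟩/⟨r,v⟩ > 0 and let r' be the orthogonal projection of r to h^⊥ in N⊗R. Then with f_x(y) := ⟨y,y⟩ + (⟨y,x⟩²/⟨h,x⟩²)⟨h,h⟩ for y ∈ h^⊥, one has ⟨r, h+t_r v⟩ = 0, d = f_{h+t_r v}(r') ≤ ⟨r',r'⟩ + (⟨r',v⟩²/⟨h,v⟩²)·⟨h,h⟩, and moreover r = ρ·h + r' with ρ = ⟨r,h⟩/⟨h,h⟩ = √((d − ⟨r',r'⟩)/⟨h,h⟩). -/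

import Mathlib

noncomputable section

/-- Let `V = N ⊗ ℝ` for a hyperbolic lattice `N` (signature `(1, n−1)`), let
`h, v` satisfy `⟨h,h⟩ > 0`, `⟨v,v⟩ > 0`, `⟨h,v⟩ > 0`, let `d ∈ ℤ`, and let `r`
satisfy `⟨r,h⟩ > 0`, `⟨r,v⟩ < 0`, `⟨r,r⟩ = d`.  Put `t_r = −⟨r,h⟩/⟨r,v⟩` and
let `r'` be the orthogonal projection of `r` to `h^⊥`.  Then `t_r > 0`,
`⟨r, h + t_r v⟩ = 0`, `d = f_{h+t_r v}(r') ≤ ⟨r',r'⟩ + (⟨r',v⟩²/⟨h,v⟩²)⟨h,h⟩`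
(where `f_x(y) = ⟨y,y⟩ + (⟨y,x⟩²/⟨h,x⟩²)⟨h,h⟩`), and `r = ρh + r'` with
`ρ = ⟨r,h⟩/⟨h,h⟩ = √((d − ⟨r',r'⟩)/⟨h,h⟩)`. -/
theorem stmt_14 {n : ℕ} {V : Type*} [AddCommGroup V] [Module ℝ V]
    (B : V →ₗ[ℝ] V →ₗ[ℝ] ℝ) (hBsymm : ∀ x y : V, B x y = B y x)
    (b : Module.Basis (Fin (n+1)) ℝ V)
    (horth : ∀ i j : Fin (n+1), i ≠ j → B (b i) (b j) = 0)
    (hsig : ∀ i : Fin (n+1), (i = 0 → 0 < B (b i) (b i)) ∧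
      (i ≠ 0 → B (b i) (b i) < 0))
    (h v : V) (hh : 0 < B h h) (hv : 0 < B v v) (hhv : 0 < B h v)
    (d : ℤ) (r : V) (hrh : 0 < B r h) (hrv : B r v < 0) (hrr : B r r = (d : ℝ))
    (tr : ℝ) (htr : tr = -(B r h) / B r v)
    (r' : V) (hr' : r' = r - (B r h / B h h) • h) :
    0 < tr ∧
    B r (h + tr • v) = 0 ∧
    (d : ℝ) = B r' r' + ((B r' (h + tr • v)) ^ 2 / (B h (h + tr • v)) ^ 2) * B h h ∧
    (d : ℝ) ≤ B r' r' + ((B r' v) ^ 2 / (B h v) ^ 2) * B h h ∧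
    r = (B r h / B h h) • h + r' ∧
    B r h / B h h = Real.sqrt (((d : ℝ) - B r' r') / B h h) := by
  have hHne : B h h ≠ 0 := ne_of_gt hh
  have hcne : B r v ≠ 0 := ne_of_lt hrv
  have hwne : B h v ≠ 0 := ne_of_gt hhv
  have htrpos : 0 < tr := by
    rw [htr]; exact div_pos_of_neg_of_neg (neg_neg_of_pos hrh) hrv
  have hhr : B h r = B r h := hBsymm h r
  have hvr : B v r = B r v := hBsymm v r
  have hvh : B v h = B h v := hBsymm v h
  set a := B r h with ha
  set H := B h h with hH
  set c := B r v with hc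
  set w := B h v with hw
  have e1 : B r (h + tr • v) = a + tr * c := by simp [ha, hc]
  have e1' : B r (h + tr • v) = 0 := by
    rw [e1, htr]; field_simp; ring
  have e2 : B r' r' = (d : ℝ) - a ^ 2 / H := by
    rw [hr']; simp [map_sub, map_smul, hrr, hhr, smul_eq_mul]; field_simp; ring
  have e3 : B r' (h + tr • v) = -(a / H) * (B h (h + tr • v)) := by
    have hrx : B r (h + tr • v) = 0 := e1'
    rw [hr']
    simp only [map_sub, LinearMap.sub_apply, LinearMap.smul_apply, map_smul,
      smul_eq_mul, hrx]
    ring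
  have e4 : B h (h + tr • v) ≠ 0 := by
    have : (0:ℝ) < B h (h + tr • v) := by
      simp only [map_add, map_smul, smul_eq_mul]
      positivity
    exact ne_of_gt this
  have e5 : B r' v = c - (a / H) * w := by
    rw [hr']; simp [map_sub, map_smul, smul_eq_mul, hc, hw]
  refine ⟨htrpos, e1', ?_, ?_, ?_, ?_⟩
  · rw [e2, e3]
    rw [mul_pow, neg_sq, div_pow, mul_div_assoc]
    rw [div_self (pow_ne_zero 2 e4)]
    field_simp
    ring
  · rw [e2, e5]
    have key : a ^ 2 / H ≤ (c - a / H * w) ^ 2 / w ^ 2 * H := by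
      have hρ : 0 < a / H := div_pos hrh hh
      have h3 : (a / H) ^ 2 * w ^ 2 ≤ (c - a / H * w) ^ 2 := by
        nlinarith [mul_pos hρ hhv]
      calc a ^ 2 / H = (a / H) ^ 2 * w ^ 2 / w ^ 2 * H := by field_simp
        _ ≤ (c - a / H * w) ^ 2 / w ^ 2 * H := by gcongr
    linarith
  · rw [hr']; abel
  · have : ((d : ℝ) - B r' r') / H = (a / H) ^ 2 := by
      rw [e2]; field_simp; ring
    rw [this, Real.sqrt_sq (div_pos hrh hh).le]

end
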